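/- Let G be a GSWF on n voters and 3 alternatives satisfying IIA, and suppose NT(G) ≥ C₁ε³ whenever Dist(G, TR₃) ≥ ε (quantitative Arrow, assumed). Let F be an SCF on 3 alternatives that is at least ε-far from every dictatorship and anti-dictatorship and satisfies Pr[F=a] ≥ ε for each alternative a, and suppose M^{a,b}(F) ≤ ε₁ for all pairs. Then ε₁ ≥ C₀ε⁶ for a universal constant C₀ > 0 (depending only on C₁). -/

import Mathlib

open Finset
open scoped Classical

/-- A linear order on the three alternatives `{0,1,2}`, represented by its ranking
permutation: `σ a` is the rank of alternative `a` (rank `0` is most preferred). -/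
abbrev Order3 := Equiv.Perm (Fin 3)

/-- A profile of `n` voters on three alternatives. -/
abbrev Profile (n : ℕ) := Fin n → Order3

/-- Voter with ranking `σ` prefers alternative `a` over alternative `b`. -/
def Prefers (σ : Order3) (a b : Fin 3) : Prop := σ a < σ b

/-- The column `x^{a,b} ∈ {0,1}ⁿ` of individual preferences between `a` and `b`. -/
noncomputable def col (n : ℕ) (x : Profile n) (a b : Fin 3) : Fin n → Bool :=
  fun i => decide (Prefers (x i) a b)

/-- `M^{a,b}(F)`: the probability that `F x = a` and `F x' = b`, where `x, x'` are uniform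
on profiles conditioned on agreeing in all individual preferences between `a` and `b`. -/
noncomputable def Mab (n : ℕ) (F : Profile n → Fin 3) (a b : Fin 3) : ℝ :=
  ((univ.filter (fun p : Profile n × Profile n =>
      col n p.1 a b = col n p.2 a b ∧ F p.1 = a ∧ F p.2 = b)).card : ℝ) /
  ((univ.filter (fun p : Profile n × Profile n =>
      col n p.1 a b = col n p.2 a b)).card : ℝ)


/-- Probability of an event under the uniform distribution on profiles. -/
noncomputable def Prob3 (n : ℕ) (p : Profile n → Prop) : ℝ :=
  ((univ.filter p).card : ℝ) / (Fintype.card (Profile n) : ℝ)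

/-- The IIA condition for a pairwise aggregation `G` on three alternatives. -/
def IIA3 (n : ℕ) (G : Profile n → Fin 3 → Fin 3 → Bool) : Prop :=
  ∀ x y : Profile n, ∀ a b : Fin 3, col n x a b = col n y a b → G x a b = G y a b

/-- The pairwise outputs of `G` are antisymmetric (a genuine GSWF output). -/
def Antisym3 (n : ℕ) (G : Profile n → Fin 3 → Fin 3 → Bool) : Prop :=
  ∀ x : Profile n, ∀ a b : Fin 3, a ≠ b → G x b a = !G x a b

/-- The output of `G` at `x` is transitive. -/
def TransAt (n : ℕ) (G : Profile n → Fin 3 → Fin 3 → Bool) (x : Profile n) : Prop :=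
  ∀ a b c : Fin 3, a ≠ b → b ≠ c → a ≠ c →
    G x a b = true → G x b c = true → G x a c = true

/-- `NT(G)`: the probability that the output of `G` is non-transitive. -/
noncomputable def NT3 (n : ℕ) (G : Profile n → Fin 3 → Fin 3 → Bool) : ℝ :=
  Prob3 n (fun x => ¬ TransAt n G x)

/-- The fraction of pairwise output values on which two GSWFs differ (averaged over the
three unordered pairs of alternatives and a uniform profile). -/
noncomputable def distG (n : ℕ) (G H : Profile n → Fin 3 → Fin 3 → Bool) : ℝ :=
  (Prob3 n (fun x => G x 0 1 ≠ H x 0 1) + Prob3 n (fun x => G x 0 2 ≠ H x 0 2) +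
    Prob3 n (fun x => G x 1 2 ≠ H x 1 2)) / 3

/-- `Dist(G, TR₃)`: the minimal fraction of output values that must be changed to turn `G`
into an always-transitive GSWF satisfying IIA. -/
noncomputable def DistTR3 (n : ℕ) (G : Profile n → Fin 3 → Fin 3 → Bool) : ℝ :=
  sInf {d : ℝ | ∃ H : Profile n → Fin 3 → Fin 3 → Bool,
    IIA3 n H ∧ Antisym3 n H ∧ (∀ x : Profile n, TransAt n H x) ∧ d = distG n G H}

/-- The distance between two SCFs: the fraction of profiles where they differ. -/
noncomputable def distSCF (n : ℕ) (F F' : Profile n → Fin 3) : ℝ :=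
  Prob3 n (fun x => F x ≠ F' x)


lemma not_not_fun' {n : ℕ} (p : Fin n → Bool) : (fun i => !(!(p i))) = p := by
  funext i; simp

lemma bool_ne_not' {a b : Bool} (h : ¬ a = !b) : a = b := by cases a <;> cases b <;> simp_all


lemma bool_ne_not {a b : Bool} (h : ¬ a = !b) : a = b := by cases a <;> cases b <;> simp_all

lemma not_not_fun {n : ℕ} (p : Fin n → Bool) : (fun i => !(!(p i))) = p := by
  funext i; simp

lemma dict_lemma : ∀ (n : ℕ) (D : (Fin n → Bool) → Bool),
    (∀ p, D (fun i => !p i) = !D p) →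
    (∀ p q r : Fin n → Bool, (∀ i, ¬(p i = q i ∧ q i = r i)) → ¬(D p = D q ∧ D q = D r)) →
    ∃ i, (∀ p, D p = p i) ∨ (∀ p, D p = !(p i)) := by
  intro n
  induction n with
  | zero =>
    intro D hodd _
    exfalso
    have h := hodd (fun _ => false)
    rw [show (fun i : Fin 0 => !((fun _ : Fin 0 => false) i)) = (fun _ : Fin 0 => false) from
      funext fun i => i.elim0] at h
    simp at h
  | succ n ih =>
    intro D hodd hprop
    have hconsnot : ∀ (u : Bool) (p : Fin n → Bool),
        (fun i => !((Fin.cons u p : Fin (n+1) → Bool) i)) = (Fin.cons (!u) (fun i => !p i) : Fin (n+1) → Bool) := by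
      intro u p; funext i
      cases i using Fin.cases <;> simp
    set Dt : (Fin n → Bool) → Bool := fun p => D (Fin.cons true p) with hDt
    set Df : (Fin n → Bool) → Bool := fun p => D (Fin.cons false p) with hDf
    have hDfDt : ∀ p, Df p = !Dt (fun i => !p i) := by
      intro p
      have h := hodd (Fin.cons true (fun i => !p i))
      rw [hconsnot] at h
      simp only [Bool.not_true, not_not_fun] at h
      exact h
    by_cases hc : ∃ c, ∀ p, Dt p = c
    · obtain ⟨c, hcc⟩ := hc
      have hfc : ∀ p, Df p = !c := by intro p; rw [hDfDt, hcc]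
      refine ⟨0, ?_⟩
      have key : ∀ x : Fin (n+1) → Bool, D x = (if x 0 then c else !c) := by
        intro x
        have hx : D x = D (Fin.cons (x 0) (Fin.tail x)) := by rw [Fin.cons_self_tail]
        rcases h0 : x 0 with _ | _
        · rw [hx, h0]; simpa using hfc (Fin.tail x)
        · rw [hx, h0]; simpa using hcc (Fin.tail x)
      cases c
      · right; intro p; rw [key p]; cases h0 : p 0 <;> simp
      · left; intro p; rw [key p]; cases h0 : p 0 <;> simp
    · push_neg at hc
      obtain ⟨pt, hpt⟩ := hc false
      obtain ⟨pf, hpf⟩ := hc true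
      rw [Bool.ne_false_iff] at hpt
      simp only [ne_eq, Bool.not_eq_true] at hpf
      -- Dt is odd
      have hodd' : ∀ p, Dt (fun i => !p i) = !Dt p := by
        intro p
        by_contra hne
        have heq : Dt (fun i => !p i) = Dt p := bool_ne_not hne
        have hDfconst : ∀ r, Df r = !Dt p := by
          intro r
          have hcompat : ∀ i : Fin (n+1),
              ¬((Fin.cons true p : Fin (n+1) → Bool) i = (Fin.cons true (fun j => !p j) : Fin (n+1) → Bool) i ∧
                (Fin.cons true (fun j => !p j) : Fin (n+1) → Bool) i = (Fin.cons false r : Fin (n+1) → Bool) i) := by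
            intro i
            cases i using Fin.cases with
            | zero =>
              simp only [Fin.cons_zero]
              simp
            | succ j =>
              simp only [Fin.cons_succ]
              simp
          have h := hprop _ _ _ hcompat
          rw [show D (Fin.cons true p) = Dt p from rfl,
              show D (Fin.cons true fun j => !p j) = Dt (fun j => !p j) from rfl,
              show D (Fin.cons false r) = Df r from rfl, heq] at h
          have hne : Df r ≠ Dt p := fun he => h ⟨rfl, he.symm⟩
          cases hdr : Df r <;> cases hdp : Dt p <;> rw [hdr, hdp] at hne <;> simp at hne ⊢
        -- but Df takes both values since Dt does
        have h1 := hDfDt (fun i => !pt i)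
        rw [not_not_fun, hpt] at h1
        have h2 := hDfDt (fun i => !pf i)
        rw [not_not_fun, hpf] at h2
        rw [hDfconst] at h1 h2
        rw [h1] at h2
        simp at h2
      have hft : ∀ p, Df p = Dt p := by
        intro p
        rw [hDfDt, hodd', Bool.not_not]
      have hprop' : ∀ p q r : Fin n → Bool, (∀ i, ¬(p i = q i ∧ q i = r i)) →
          ¬(Dt p = Dt q ∧ Dt q = Dt r) := by
        intro p q r hcompat
        have hcompat' : ∀ i : Fin (n+1),
            ¬((Fin.cons true p : Fin (n+1) → Bool) i = (Fin.cons false q : Fin (n+1) → Bool) i ∧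
              (Fin.cons false q : Fin (n+1) → Bool) i = (Fin.cons true r : Fin (n+1) → Bool) i) := by
          intro i
          cases i using Fin.cases with
          | zero =>
            simp only [Fin.cons_zero]
            simp
          | succ j =>
            simp only [Fin.cons_succ]
            exact hcompat j
        have h := hprop _ _ _ hcompat'
        rw [show D (Fin.cons true p) = Dt p from rfl,
            show D (Fin.cons false q) = Df q from rfl,
            show D (Fin.cons true r) = Dt r from rfl, hft] at h
        exact h
      obtain ⟨i, hi⟩ := ih Dt hodd' hprop'
      refine ⟨i.succ, ?_⟩
      have key : ∀ x : Fin (n+1) → Bool, D x = Dt (Fin.tail x) := by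
        intro x
        have hx : D x = D (Fin.cons (x 0) (Fin.tail x)) := by rw [Fin.cons_self_tail]
        rcases h0 : x 0 with _ | _
        · rw [hx, h0]; exact hft (Fin.tail x)
        · rw [hx, h0]
      rcases hi with hi | hi
      · left; intro p; rw [key p, hi]; rfl
      · right; intro p; rw [key p, hi]; rfl

lemma nae_main (n : ℕ) (A B C : (Fin n → Bool) → Bool)
    (hyp : ∀ p q r : Fin n → Bool, (∀ i, ¬(p i = q i ∧ q i = r i)) →
      ¬(A p = B q ∧ B q = C r)) :
    (∃ c, ∀ p, A p = c) ∨ (∃ c, ∀ p, B p = c) ∨ (∃ c, ∀ p, C p = c) ∨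
    (∃ i, (∀ p, A p = p i) ∧ (∀ p, B p = p i) ∧ (∀ p, C p = p i)) ∨
    (∃ i, (∀ p, A p = !(p i)) ∧ (∀ p, B p = !(p i)) ∧ (∀ p, C p = !(p i))) := by
  by_cases hA : ∃ c, ∀ p, A p = c
  · exact Or.inl hA
  by_cases hB : ∃ c, ∀ p, B p = c
  · exact Or.inr (Or.inl hB)
  by_cases hC : ∃ c, ∀ p, C p = c
  · exact Or.inr (Or.inr (Or.inl hC))
  push_neg at hA hB hC
  have hAv : ∀ c, ∃ p, A p = c := by
    intro c
    obtain ⟨p, hp⟩ := hA (!c)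
    exact ⟨p, bool_ne_not' hp⟩
  have hBv : ∀ c, ∃ p, B p = c := by
    intro c
    obtain ⟨p, hp⟩ := hB (!c)
    exact ⟨p, bool_ne_not' hp⟩
  have hCv : ∀ c, ∃ p, C p = c := by
    intro c
    obtain ⟨p, hp⟩ := hC (!c)
    exact ⟨p, bool_ne_not' hp⟩
  -- R1 : B (¬p) = !A p
  have R1 : ∀ p, B (fun i => !p i) = !A p := by
    intro p
    by_contra hne
    have heq : B (fun i => !p i) = A p := bool_ne_not' hne
    obtain ⟨r, hr⟩ := hCv (A p)
    exact hyp p (fun i => !p i) r (fun i => by simp) ⟨heq.symm, heq.trans hr.symm⟩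
  -- R2 : C (¬p) = !A p
  have R2 : ∀ p, C (fun i => !p i) = !A p := by
    intro p
    by_contra hne
    have heq : C (fun i => !p i) = A p := bool_ne_not' hne
    obtain ⟨q, hq⟩ := hBv (A p)
    refine hyp p q (fun i => !p i) (fun i => ?_) ⟨hq.symm, hq.trans heq.symm⟩
    rintro ⟨h1, h2⟩
    rw [← h1] at h2
    simp at h2
  -- R3 : C (¬q) = !B q
  have R3 : ∀ q, C (fun i => !q i) = !B q := by
    intro q
    by_contra hne
    have heq : C (fun i => !q i) = B q := bool_ne_not' hne
    obtain ⟨p, hp⟩ := hAv (B q)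
    refine hyp p q (fun i => !q i) (fun i => ?_) ⟨hp, heq.symm⟩
    rintro ⟨-, h2⟩
    simp at h2
  have hBA : ∀ q, B q = A q := by
    intro q
    have h2 := R2 q
    have h3 := R3 q
    rw [h3] at h2
    simpa using h2
  have hCA : ∀ q, C q = A q := by
    intro q
    have h2 := R2 (fun i => !q i)
    rw [not_not_fun'] at h2
    have h1 := R1 (fun i => !q i)
    rw [not_not_fun'] at h1
    rw [hBA] at h1
    rw [h2, h1]
  have hodd : ∀ p, A (fun i => !p i) = !A p := by
    intro p
    rw [← hBA]
    exact R1 p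
  have hypA : ∀ p q r : Fin n → Bool, (∀ i, ¬(p i = q i ∧ q i = r i)) →
      ¬(A p = A q ∧ A q = A r) := by
    intro p q r hc
    have := hyp p q r hc
    rw [hBA, hCA] at this
    exact this
  obtain ⟨i, hi⟩ := dict_lemma n A hodd hypA
  rcases hi with hi | hi
  · exact Or.inr (Or.inr (Or.inr (Or.inl ⟨i, hi, fun p => (hBA p).trans (hi p),
      fun p => (hCA p).trans (hi p)⟩)))
  · exact Or.inr (Or.inr (Or.inr (Or.inr ⟨i, hi, fun p => (hBA p).trans (hi p),
      fun p => (hCA p).trans (hi p)⟩)))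


instance instPrefersDec (σ : Order3) (a b : Fin 3) : Decidable (Prefers σ a b) := by
  unfold Prefers; infer_instance

lemma decide_irrel (p : Prop) (h1 h2 : Decidable p) : @decide p h1 = @decide p h2 := by
  rw [Bool.eq_iff_iff]; simp

lemma col_apply (n : ℕ) (x : Profile n) (a b : Fin 3) (i : Fin n) :
    col n x a b i = decide (Prefers (x i) a b) := decide_irrel _ _ _

lemma col_true_iff (n : ℕ) (x : Profile n) (a b : Fin 3) (i : Fin n) :
    col n x a b i = true ↔ (x i) a < (x i) b := by
  rw [col_apply]; exact decide_eq_true_iff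


lemma ne01 : (0 : Fin 3) ≠ 1 := by decide
lemma ne02 : (0 : Fin 3) ≠ 2 := by decide
lemma ne12 : (1 : Fin 3) ≠ 2 := by decide

lemma exists_order3 : ∀ (a b : Fin 3), a ≠ b → ∀ c : Bool,
    ∃ σ : Order3, decide (Prefers σ a b) = c := by decide

noncomputable def prof3 (n : ℕ) {a b : Fin 3} (hab : a ≠ b) (z : Fin n → Bool) : Profile n :=
  fun i => (exists_order3 a b hab (z i)).choose

lemma col_prof3 (n : ℕ) {a b : Fin 3} (hab : a ≠ b) (z : Fin n → Bool) :
    col n (prof3 n hab z) a b = z := by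
  funext i
  rw [col_apply]
  exact (exists_order3 a b hab (z i)).choose_spec

lemma exists_order_triple : ∀ u v w : Bool, ¬(u = v ∧ v = w) → ∃ σ : Order3,
    decide (Prefers σ 0 1) = u ∧ decide (Prefers σ 0 2) = !v ∧ decide (Prefers σ 1 2) = w := by
  decide

noncomputable def prof3' (n : ℕ) (p q r : Fin n → Bool)
    (hc : ∀ i, ¬(p i = q i ∧ q i = r i)) : Profile n :=
  fun i => (exists_order_triple (p i) (q i) (r i) (hc i)).choose

lemma col_prof3'_01 (n : ℕ) (p q r : Fin n → Bool) (hc : ∀ i, ¬(p i = q i ∧ q i = r i)) :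
    col n (prof3' n p q r hc) 0 1 = p := by
  funext i; rw [col_apply]
  exact (exists_order_triple (p i) (q i) (r i) (hc i)).choose_spec.1

lemma col_prof3'_02 (n : ℕ) (p q r : Fin n → Bool) (hc : ∀ i, ¬(p i = q i ∧ q i = r i)) :
    col n (prof3' n p q r hc) 0 2 = fun i => !q i := by
  funext i; rw [col_apply]
  exact (exists_order_triple (p i) (q i) (r i) (hc i)).choose_spec.2.1

lemma col_prof3'_12 (n : ℕ) (p q r : Fin n → Bool) (hc : ∀ i, ¬(p i = q i ∧ q i = r i)) :
    col n (prof3' n p q r hc) 1 2 = r := by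
  funext i; rw [col_apply]
  exact (exists_order_triple (p i) (q i) (r i) (hc i)).choose_spec.2.2

def IsTop3 (n : ℕ) (H : Profile n → Fin 3 → Fin 3 → Bool) (x : Profile n) (a : Fin 3) : Prop :=
  ∀ b, b ≠ a → H x a b = true

lemma pair_enum : ∀ u v : Fin 3, u ≠ v → (u = 0 ∧ v = 1) ∨ (u = 1 ∧ v = 0) ∨ (u = 0 ∧ v = 2) ∨
    (u = 2 ∧ v = 0) ∨ (u = 1 ∧ v = 2) ∨ (u = 2 ∧ v = 1) := by decide

lemma flip_lt {α : Type*} [LinearOrder α] {u v : α} (h : u ≠ v) : v < u ↔ ¬ u < v :=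
  ⟨fun h1 h2 => absurd h1 (asymm h2), fun h1 => h.lt_or_gt.resolve_left h1⟩

lemma rev_iff (b : Bool) {α : Type*} [LinearOrder α] {s t : α} (hne : s ≠ t)
    (k : b = true ↔ s < t) : (!b) = true ↔ t < s := by
  rw [flip_lt hne, ← k]; cases b <;> simp

noncomputable def A3 (n : ℕ) (H : Profile n → Fin 3 → Fin 3 → Bool) : (Fin n → Bool) → Bool :=
  fun z => H (prof3 n ne01 z) 0 1
noncomputable def F02 (n : ℕ) (H : Profile n → Fin 3 → Fin 3 → Bool) : (Fin n → Bool) → Bool :=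
  fun z => H (prof3 n ne02 z) 0 2
noncomputable def B3 (n : ℕ) (H : Profile n → Fin 3 → Fin 3 → Bool) : (Fin n → Bool) → Bool :=
  fun q => !(F02 n H (fun i => !q i))
noncomputable def C3 (n : ℕ) (H : Profile n → Fin 3 → Fin 3 → Bool) : (Fin n → Bool) → Bool :=
  fun z => H (prof3 n ne12 z) 1 2

lemma F02_eq_B3 (n : ℕ) (H : Profile n → Fin 3 → Fin 3 → Bool) (z : Fin n → Bool) :
    F02 n H z = !(B3 n H (fun i => !z i)) := by
  unfold B3
  rw [not_not_fun, Bool.not_not]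


lemma classify (n : ℕ) (H : Profile n → Fin 3 → Fin 3 → Bool) (hI : IIA3 n H)
    (hA : Antisym3 n H) (hT : ∀ x, TransAt n H x) :
    (∃ c : Fin 3, ∀ x, ¬ IsTop3 n H x c) ∨
    (∃ i, ∀ x a, IsTop3 n H x a → a = (x i).symm 0) ∨
    (∃ i, ∀ x a, IsTop3 n H x a → a = (x i).symm 2) := by
  have hH01 : ∀ x, H x 0 1 = A3 n H (col n x 0 1) :=
    fun x => hI x _ 0 1 (col_prof3 n ne01 (col n x 0 1)).symm
  have hH02 : ∀ x, H x 0 2 = F02 n H (col n x 0 2) :=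
    fun x => hI x _ 0 2 (col_prof3 n ne02 (col n x 0 2)).symm
  have hH12 : ∀ x, H x 1 2 = C3 n H (col n x 1 2) :=
    fun x => hI x _ 1 2 (col_prof3 n ne12 (col n x 1 2)).symm
  have hyp : ∀ p q r : Fin n → Bool, (∀ i, ¬(p i = q i ∧ q i = r i)) →
      ¬(A3 n H p = B3 n H q ∧ B3 n H q = C3 n H r) := by
    intro p q r hc
    have e1 : A3 n H p = H (prof3' n p q r hc) 0 1 :=
      hI _ _ 0 1 (by rw [col_prof3 n ne01, col_prof3'_01])
    have e2 : F02 n H (fun i => !q i) = H (prof3' n p q r hc) 0 2 :=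
      hI _ _ 0 2 (by rw [col_prof3 n ne02, col_prof3'_02])
    have e3 : C3 n H r = H (prof3' n p q r hc) 1 2 :=
      hI _ _ 1 2 (by rw [col_prof3 n ne12, col_prof3'_12])
    have eB : B3 n H q = !(H (prof3' n p q r hc) 0 2) := by
      unfold B3; rw [e2]
    set x := prof3' n p q r hc
    rintro ⟨g1, g2⟩
    rw [e1, eB] at g1
    rw [eB, e3] at g2
    rcases ht : H x 0 1 with _ | _
    · rw [ht] at g1
      have hx02 : H x 0 2 = true := by
        rcases h : H x 0 2 with _ | _
        · rw [h] at g1; simp at g1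
        · rfl
      have hx12 : H x 1 2 = false := by
        rw [← g2, hx02]; rfl
      have e21 : H x 2 1 = true := by rw [hA x 1 2 ne12, hx12]; rfl
      have e10 : H x 1 0 = true := by rw [hA x 0 1 ne01, ht]; rfl
      have := hT x 2 1 0 (by decide) (by decide) (by decide) e21 e10
      rw [hA x 0 2 ne02, hx02] at this
      simp at this
    · rw [ht] at g1
      have hx02 : H x 0 2 = false := by
        rcases h : H x 0 2 with _ | _
        · rfl
        · rw [h] at g1; simp at g1
      have hx12 : H x 1 2 = true := by rw [← g2, hx02]; rfl
      have := hT x 0 1 2 (by decide) (by decide) (by decide) ht hx12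
      rw [hx02] at this
      simp at this
  rcases nae_main n (A3 n H) (B3 n H) (C3 n H) hyp with
    ⟨c, hc⟩ | ⟨c, hc⟩ | ⟨c, hc⟩ | ⟨i, hA1, hB1, hC1⟩ | ⟨i, hA1, hB1, hC1⟩
  · -- A3 constant
    left
    cases c
    · refine ⟨0, fun x htop => ?_⟩
      have h := htop 1 (by decide)
      rw [hH01, hc] at h
      exact absurd h (by simp)
    · refine ⟨1, fun x htop => ?_⟩
      have h := htop 0 (by decide)
      rw [hA x 0 1 ne01, hH01, hc] at h
      exact absurd h (by simp)
  · -- B3 constant; H x 0 2 = !c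
    left
    have hf : ∀ x, H x 0 2 = !c := by
      intro x; rw [hH02, F02_eq_B3, hc]
    cases c
    · refine ⟨2, fun x htop => ?_⟩
      have h := htop 0 (by decide)
      rw [hA x 0 2 ne02, hf] at h
      exact absurd h (by simp)
    · refine ⟨0, fun x htop => ?_⟩
      have h := htop 2 (by decide)
      rw [hf] at h
      exact absurd h (by simp)
  · -- C3 constant
    left
    cases c
    · refine ⟨1, fun x htop => ?_⟩
      have h := htop 2 (by decide)
      rw [hH12, hc] at h
      exact absurd h (by simp)
    · refine ⟨2, fun x htop => ?_⟩
      have h := htop 1 (by decide)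
      rw [hA x 1 2 ne12, hH12, hc] at h
      exact absurd h (by simp)
  · -- dictator i
    right; left
    refine ⟨i, fun x a htop => ?_⟩
    have k01 : H x 0 1 = true ↔ (x i) 0 < (x i) 1 := by
      rw [hH01, hA1, col_true_iff]
    have k02 : H x 0 2 = true ↔ (x i) 0 < (x i) 2 := by
      rw [hH02, F02_eq_B3, hB1, Bool.not_not, col_true_iff]
    have k12 : H x 1 2 = true ↔ (x i) 1 < (x i) 2 := by
      rw [hH12, hC1, col_true_iff]
    have key : ∀ u v : Fin 3, u ≠ v → (H x u v = true ↔ (x i) u < (x i) v) := by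
      intro u v huv
      have hne : (x i) u ≠ (x i) v := fun e => huv ((x i).injective e)
      rcases pair_enum u v huv with ⟨rfl, rfl⟩ | ⟨rfl, rfl⟩ | ⟨rfl, rfl⟩ | ⟨rfl, rfl⟩ |
        ⟨rfl, rfl⟩ | ⟨rfl, rfl⟩
      · exact k01
      · rw [hA x 0 1 ne01]
        exact rev_iff _ (fun e => hne e.symm) k01
      · exact k02
      · rw [hA x 0 2 ne02]
        exact rev_iff _ (fun e => hne e.symm) k02
      · exact k12
      · rw [hA x 1 2 ne12]
        exact rev_iff _ (fun e => hne e.symm) k12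
    have hrank : (x i) a = 0 := by
      by_contra hne
      have hy : (x i).symm 0 ≠ a := fun e => hne (by rw [← e]; simp)
      have h := (key a _ (Ne.symm hy)).mp (htop _ hy)
      rw [Equiv.apply_symm_apply] at h
      exact absurd h (by simp)
    rw [← hrank]; exact ((x i).symm_apply_apply a).symm
  · -- anti-dictator i
    right; right
    refine ⟨i, fun x a htop => ?_⟩
    have k01 : H x 0 1 = true ↔ (x i) 1 < (x i) 0 := by
      rw [hH01, hA1]
      exact rev_iff _ (fun e => ne01 ((x i).injective e)) (col_true_iff n x 0 1 i)
    have k02 : H x 0 2 = true ↔ (x i) 2 < (x i) 0 := by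
      rw [hH02, F02_eq_B3, hB1, Bool.not_not]
      exact rev_iff _ (fun e => ne02 ((x i).injective e)) (col_true_iff n x 0 2 i)
    have k12 : H x 1 2 = true ↔ (x i) 2 < (x i) 1 := by
      rw [hH12, hC1]
      exact rev_iff _ (fun e => ne12 ((x i).injective e)) (col_true_iff n x 1 2 i)
    have key : ∀ u v : Fin 3, u ≠ v → (H x u v = true ↔ (x i) v < (x i) u) := by
      intro u v huv
      have hne : (x i) u ≠ (x i) v := fun e => huv ((x i).injective e)
      rcases pair_enum u v huv with ⟨rfl, rfl⟩ | ⟨rfl, rfl⟩ | ⟨rfl, rfl⟩ | ⟨rfl, rfl⟩ |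
        ⟨rfl, rfl⟩ | ⟨rfl, rfl⟩
      · exact k01
      · rw [hA x 0 1 ne01]
        exact rev_iff _ hne k01
      · exact k02
      · rw [hA x 0 2 ne02]
        exact rev_iff _ hne k02
      · exact k12
      · rw [hA x 1 2 ne12]
        exact rev_iff _ hne k12
    have hrank : (x i) a = 2 := by
      by_contra hne
      have hy : (x i).symm 2 ≠ a := fun e => hne (by rw [← e]; simp)
      have h := (key a _ (Ne.symm hy)).mp (htop _ hy)
      rw [Equiv.apply_symm_apply] at h
      have h3 := ((x i) a).isLt
      rw [Fin.lt_def] at h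
      omega
    rw [← hrank]; exact ((x i).symm_apply_apply a).symm


lemma flip_lt' {α : Type*} [LinearOrder α] {u v : α} (h : u ≠ v) : v < u ↔ ¬ u < v :=
  ⟨fun h1 h2 => absurd h1 (asymm h2), fun h1 => h.lt_or_gt.resolve_left h1⟩

lemma col_swap (n : ℕ) (x : Profile n) {a b : Fin 3} (hab : a ≠ b) :
    col n x b a = fun i => !(col n x a b i) := by
  funext i
  rw [col_apply, col_apply]
  have hne : (x i) a ≠ (x i) b := fun e => hab ((x i).injective e)
  rw [Bool.eq_iff_iff]
  simp only [decide_eq_true_eq, Bool.not_eq_true', decide_eq_false_iff_not]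
  unfold Prefers
  exact flip_lt' hne

lemma col_eq_swap_iff (n : ℕ) (x : Profile n) {a b : Fin 3} (hab : a ≠ b) (z : Fin n → Bool) :
    col n x b a = (fun i => !z i) ↔ col n x a b = z := by
  rw [col_swap n x hab]
  constructor
  · intro h
    funext i
    have := congrFun h i
    simpa using this
  · intro h; rw [h]

noncomputable def mcount (n : ℕ) (F : Profile n → Fin 3) (a b : Fin 3) (z : Fin n → Bool) : ℕ :=
  (univ.filter (fun x : Profile n => col n x a b = z ∧ F x = a)).card

noncomputable def gd (n : ℕ) (F : Profile n → Fin 3) (a b : Fin 3) (z : Fin n → Bool) : Bool :=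
  decide (mcount n F b a (fun i => !z i) < mcount n F a b z ∨
    (mcount n F b a (fun i => !z i) = mcount n F a b z ∧ a < b))

noncomputable def Gc (n : ℕ) (F : Profile n → Fin 3) : Profile n → Fin 3 → Fin 3 → Bool :=
  fun x a b => if a = b then false else gd n F a b (col n x a b)

lemma not_not_fun2 {n : ℕ} (p : Fin n → Bool) : (fun i => !(!(p i))) = p := by
  funext i; simp

lemma Gc_IIA (n : ℕ) (F : Profile n → Fin 3) : IIA3 n (Gc n F) := by
  intro x y a b h
  unfold Gc
  by_cases hab : a = b
  · simp [hab]
  · simp only [hab, if_false, h]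

lemma Gc_antisym (n : ℕ) (F : Profile n → Fin 3) : Antisym3 n (Gc n F) := by
  intro x a b hab
  unfold Gc
  simp only [hab, Ne.symm hab, if_false]
  rw [col_swap n x hab]
  unfold gd
  rw [not_not_fun2]
  rcases lt_trichotomy (mcount n F a b (col n x a b))
    (mcount n F b a (fun i => !col n x a b i)) with h | h | h
  · have hP2 : ¬ (mcount n F b a (fun i => !col n x a b i) < mcount n F a b (col n x a b) ∨
        (mcount n F b a (fun i => !col n x a b i) = mcount n F a b (col n x a b) ∧ a < b)) := by
      rintro (hh | ⟨hh, -⟩)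
      · exact asymm h hh
      · exact h.ne' hh
    rw [decide_eq_true (Or.inl h), decide_eq_false hP2]
    rfl
  · rcases hab.lt_or_gt with hl | hl
    · have hP1 : ¬ (mcount n F a b (col n x a b) < mcount n F b a (fun i => !col n x a b i) ∨
          (mcount n F a b (col n x a b) = mcount n F b a (fun i => !col n x a b i) ∧ b < a)) := by
        rintro (hh | ⟨-, hh⟩)
        · exact absurd hh (h ▸ lt_irrefl _)
        · exact asymm hl hh
      rw [decide_eq_false hP1, decide_eq_true (Or.inr ⟨h.symm, hl⟩)]
      rfl
    · have hP2 : ¬ (mcount n F b a (fun i => !col n x a b i) < mcount n F a b (col n x a b) ∨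
          (mcount n F b a (fun i => !col n x a b i) = mcount n F a b (col n x a b) ∧ a < b)) := by
        rintro (hh | ⟨-, hh⟩)
        · exact absurd hh (h ▸ lt_irrefl _)
        · exact asymm hl hh
      rw [decide_eq_true (Or.inr ⟨h, hl⟩), decide_eq_false hP2]
      rfl
  · have hP1 : ¬ (mcount n F a b (col n x a b) < mcount n F b a (fun i => !col n x a b i) ∨
        (mcount n F a b (col n x a b) = mcount n F b a (fun i => !col n x a b i) ∧ b < a)) := by
      rintro (hh | ⟨hh, -⟩)
      · exact asymm h hh
      · exact h.ne hh.symm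
    rw [decide_eq_false hP1, decide_eq_true (Or.inl h)]
    rfl

lemma Gc_false_le (n : ℕ) (F : Profile n → Fin 3) (x : Profile n) {a b : Fin 3} (hab : a ≠ b)
    (h : Gc n F x a b = false) :
    mcount n F a b (col n x a b) ≤ mcount n F b a (fun i => !(col n x a b i)) := by
  unfold Gc at h
  simp only [hab, if_false] at h
  unfold gd at h
  simp only [decide_eq_false_iff_not, not_or] at h
  exact le_of_not_gt h.1

lemma order_count : ∀ (a b : Fin 3), a ≠ b → ∀ c : Bool,
    (univ.filter fun σ : Order3 => decide (Prefers σ a b) = c).card = 3 := by decide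

instance (n : ℕ) : Nonempty (Profile n) := ⟨fun _ => Equiv.refl _⟩

lemma card_profile (n : ℕ) : Fintype.card (Profile n) = 6 ^ n := by
  rw [Fintype.card_fun]
  rw [Fintype.card_perm]
  norm_num [Nat.factorial]

lemma card_col_fiber (n : ℕ) {a b : Fin 3} (hab : a ≠ b) (z : Fin n → Bool) :
    (univ.filter fun x : Profile n => col n x a b = z).card = 3 ^ n := by
  have hset : (univ.filter fun x : Profile n => col n x a b = z) =
      Fintype.piFinset (fun i => univ.filter fun σ : Order3 => decide (Prefers σ a b) = z i) := by
    ext x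
    simp only [mem_filter, mem_univ, true_and, Fintype.mem_piFinset, funext_iff]
    constructor
    · intro h i
      rw [← col_apply]; exact h i
    · intro h i
      rw [col_apply]; exact h i
  rw [hset, Fintype.card_piFinset]
  simp [order_count a b hab]

lemma mcount_swap (n : ℕ) (F : Profile n → Fin 3) {a b : Fin 3} (hab : a ≠ b)
    (z : Fin n → Bool) :
    (univ.filter fun x : Profile n => col n x a b = z ∧ F x = b).card
      = mcount n F b a (fun i => !z i) := by
  unfold mcount
  congr 1
  ext x
  simp only [mem_filter, mem_univ, true_and]
  rw [col_eq_swap_iff n x hab z]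

lemma Mab_num_card (n : ℕ) (F : Profile n → Fin 3) {a b : Fin 3} (hab : a ≠ b) :
    (univ.filter (fun p : Profile n × Profile n =>
      col n p.1 a b = col n p.2 a b ∧ F p.1 = a ∧ F p.2 = b)).card
    = ∑ z : Fin n → Bool, mcount n F a b z * mcount n F b a (fun i => !z i) := by
  rw [Finset.card_eq_sum_card_fiberwise
    (f := fun p : Profile n × Profile n => col n p.1 a b) (t := univ)
    (fun x _ => mem_univ _)]
  refine Finset.sum_congr rfl fun z _ => ?_
  have hset : ((univ.filter (fun p : Profile n × Profile n =>
      col n p.1 a b = col n p.2 a b ∧ F p.1 = a ∧ F p.2 = b)).filter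
        (fun p => col n p.1 a b = z))
    = (univ.filter fun x : Profile n => col n x a b = z ∧ F x = a) ×ˢ
      (univ.filter fun x : Profile n => col n x a b = z ∧ F x = b) := by
    ext ⟨x1, x2⟩
    simp only [mem_filter, mem_univ, true_and, Finset.mem_product]
    constructor
    · rintro ⟨⟨hcc, h1, h2⟩, hz⟩
      exact ⟨⟨hz, h1⟩, ⟨hcc ▸ hz, h2⟩⟩
    · rintro ⟨⟨hz1, h1⟩, ⟨hz2, h2⟩⟩
      exact ⟨⟨hz1.trans hz2.symm, h1, h2⟩, hz1⟩
  rw [hset, Finset.card_product, mcount_swap n F hab z]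
  rfl

lemma Mab_den_card (n : ℕ) (F : Profile n → Fin 3) {a b : Fin 3} (hab : a ≠ b) :
    (univ.filter (fun p : Profile n × Profile n =>
      col n p.1 a b = col n p.2 a b)).card = 2 ^ n * (3 ^ n * 3 ^ n) := by
  rw [Finset.card_eq_sum_card_fiberwise
    (f := fun p : Profile n × Profile n => col n p.1 a b) (t := univ)
    (fun x _ => mem_univ _)]
  have : ∀ z : Fin n → Bool, ((univ.filter (fun p : Profile n × Profile n =>
      col n p.1 a b = col n p.2 a b)).filter (fun p => col n p.1 a b = z)).card
        = 3 ^ n * 3 ^ n := by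
    intro z
    have hset : ((univ.filter (fun p : Profile n × Profile n =>
        col n p.1 a b = col n p.2 a b)).filter (fun p => col n p.1 a b = z))
      = (univ.filter fun x : Profile n => col n x a b = z) ×ˢ
        (univ.filter fun x : Profile n => col n x a b = z) := by
      ext ⟨x1, x2⟩
      simp only [mem_filter, mem_univ, true_and, Finset.mem_product]
      constructor
      · rintro ⟨hcc, hz⟩
        exact ⟨hz, hcc ▸ hz⟩
      · rintro ⟨hz1, hz2⟩
        exact ⟨hz1.trans hz2.symm, hz1⟩
    rw [hset, Finset.card_product, card_col_fiber n hab z]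
  rw [Finset.sum_congr rfl (fun z _ => this z)]
  simp [Finset.card_univ]

lemma event_card (n : ℕ) (F : Profile n → Fin 3) {a b : Fin 3} (hab : a ≠ b) :
    (univ.filter (fun x : Profile n => F x = a ∧ Gc n F x a b = false)).card
    = ∑ z : Fin n → Bool, if gd n F a b z = false then mcount n F a b z else 0 := by
  rw [Finset.card_eq_sum_card_fiberwise
    (f := fun x : Profile n => col n x a b) (t := univ) (fun x _ => mem_univ _)]
  refine Finset.sum_congr rfl fun z _ => ?_
  by_cases hz : gd n F a b z = false
  · rw [if_pos hz]
    unfold mcount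
    congr 1
    ext x
    simp only [mem_filter, mem_univ, true_and]
    constructor
    · rintro ⟨⟨h1, -⟩, h2⟩
      exact ⟨h2, h1⟩
    · rintro ⟨h2, h1⟩
      refine ⟨⟨h1, ?_⟩, h2⟩
      unfold Gc
      rw [if_neg hab, h2, hz]
  · rw [if_neg hz]
    have hset : ((univ.filter (fun x : Profile n => F x = a ∧ Gc n F x a b = false)).filter
        (fun x => col n x a b = z)) = ∅ := by
      ext x
      simp only [Finset.notMem_empty, iff_false, mem_filter, mem_univ, true_and, not_and]
      rintro ⟨-, hg⟩ h2
      unfold Gc at hg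
      rw [if_neg hab, h2] at hg
      exact hz hg
    rw [hset]
    rfl

lemma card_profile_pos (n : ℕ) : 0 < ((Fintype.card (Profile n) : ℝ)) := by
  rw [card_profile]
  positivity

lemma Prob3_nonneg (n : ℕ) (p : Profile n → Prop) : 0 ≤ Prob3 n p := by
  unfold Prob3
  positivity

lemma Prob3_le_one (n : ℕ) (p : Profile n → Prop) : Prob3 n p ≤ 1 := by
  unfold Prob3
  rw [div_le_one (card_profile_pos n)]
  exact_mod_cast Finset.card_le_card (Finset.filter_subset _ _) |>.trans
    (le_of_eq (Finset.card_univ))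

lemma Prob3_mono (n : ℕ) (p q : Profile n → Prop) (h : ∀ x, p x → q x) :
    Prob3 n p ≤ Prob3 n q := by
  unfold Prob3
  rw [div_le_div_iff_of_pos_right (card_profile_pos n)]
  exact_mod_cast Finset.card_le_card (fun x hx => by
    simp only [mem_filter, mem_univ, true_and] at hx ⊢
    exact h x hx)

lemma Prob3_or (n : ℕ) (p q r : Profile n → Prop) (h : ∀ x, p x → q x ∨ r x) :
    Prob3 n p ≤ Prob3 n q + Prob3 n r := by
  unfold Prob3
  rw [← add_div, div_le_div_iff_of_pos_right (card_profile_pos n)]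
  have hsub : (univ.filter p) ⊆ (univ.filter q) ∪ (univ.filter r) := by
    intro x hx
    simp only [mem_filter, mem_univ, true_and, Finset.mem_union] at hx ⊢
    exact h x hx
  calc ((univ.filter p).card : ℝ) ≤ (((univ.filter q) ∪ (univ.filter r)).card : ℝ) := by
        exact_mod_cast Finset.card_le_card hsub
    _ ≤ _ := by exact_mod_cast Finset.card_union_le _ _

lemma pair_bound (n : ℕ) (F : Profile n → Fin 3) {a b : Fin 3} (hab : a ≠ b) :
    Prob3 n (fun x => F x = a ∧ Gc n F x a b = false) ≤ Real.sqrt (Mab n F a b) := by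
  set u : (Fin n → Bool) → ℝ := fun z => (mcount n F a b z : ℝ) with hu
  set v : (Fin n → Bool) → ℝ := fun z => (mcount n F b a (fun i => !z i) : ℝ) with hv
  have hu0 : ∀ z, 0 ≤ u z := fun z => Nat.cast_nonneg _
  have hv0 : ∀ z, 0 ≤ v z := fun z => Nat.cast_nonneg _
  set T : ℝ := ∑ z : Fin n → Bool, u z * v z with hT
  have hT0 : 0 ≤ T := Finset.sum_nonneg fun z _ => mul_nonneg (hu0 z) (hv0 z)
  set S : ℝ := ∑ z : Fin n → Bool, (if gd n F a b z = false then u z else 0) with hS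
  have hS0 : 0 ≤ S := Finset.sum_nonneg fun z _ => by
    split_ifs
    · exact hu0 z
    · exact le_rfl
  -- termwise bound
  have hterm : ∀ z : Fin n → Bool, (if gd n F a b z = false then u z else 0)
      ≤ Real.sqrt (u z * v z) := by
    intro z
    split_ifs with hz
    · have hle : mcount n F a b z ≤ mcount n F b a (fun i => !z i) := by
        unfold gd at hz
        simp only [decide_eq_false_iff_not, not_or] at hz
        exact le_of_not_gt hz.1
      have huv : u z ≤ v z := by
        simp only [hu, hv]
        exact_mod_cast hle
      have h2 : u z ^ 2 ≤ u z * v z := by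
        rw [sq]
        exact mul_le_mul_of_nonneg_left huv (hu0 z)
      calc u z = Real.sqrt (u z ^ 2) := (Real.sqrt_sq (hu0 z)).symm
        _ ≤ Real.sqrt (u z * v z) := Real.sqrt_le_sqrt h2
    · exact Real.sqrt_nonneg _
  have hSsq : S ^ 2 ≤ (2 : ℝ) ^ n * T := by
    have h1 : S ≤ ∑ z : Fin n → Bool, Real.sqrt (u z * v z) :=
      Finset.sum_le_sum fun z _ => hterm z
    have h2 : (∑ z : Fin n → Bool, Real.sqrt (u z * v z)) ^ 2 ≤ (2 : ℝ) ^ n * T := by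
      have hcs := Finset.sum_mul_sq_le_sq_mul_sq Finset.univ (fun _ : Fin n → Bool => (1 : ℝ))
        (fun z => Real.sqrt (u z * v z))
      simp only [one_mul, one_pow] at hcs
      calc (∑ z : Fin n → Bool, Real.sqrt (u z * v z)) ^ 2
          ≤ (∑ _z : Fin n → Bool, (1:ℝ)) * ∑ z : Fin n → Bool, Real.sqrt (u z * v z) ^ 2 := hcs
        _ = (2 : ℝ) ^ n * T := by
            rw [Finset.sum_const, Finset.card_univ]
            congr 1
            · simp [Fintype.card_fun]
            · rw [hT]
              exact Finset.sum_congr rfl fun z _ =>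
                Real.sq_sqrt (mul_nonneg (hu0 z) (hv0 z))
    calc S ^ 2 ≤ (∑ z : Fin n → Bool, Real.sqrt (u z * v z)) ^ 2 := by
          apply pow_le_pow_left₀ hS0 h1
      _ ≤ _ := h2
  -- express Prob and Mab
  have hProb : Prob3 n (fun x => F x = a ∧ Gc n F x a b = false) = S / (6 : ℝ) ^ n := by
    unfold Prob3
    rw [Finset.filter_congr_decidable, event_card n F hab, card_profile]
    push_cast
    rw [hS]
  have hMab : Mab n F a b = T / ((2 : ℝ) ^ n * ((3:ℝ) ^ n * (3:ℝ) ^ n)) := by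
    unfold Mab
    rw [Finset.filter_congr_decidable, Finset.filter_congr_decidable,
      Mab_num_card n F hab, Mab_den_card n F hab]
    push_cast
    rw [hT]
  rw [hProb, hMab]
  have hd2 : (0:ℝ) < (2:ℝ) ^ n * ((3:ℝ) ^ n * (3:ℝ) ^ n) := by positivity
  have hx : 0 ≤ S / (6:ℝ) ^ n := div_nonneg hS0 (by positivity)
  have hy : 0 ≤ T / ((2:ℝ) ^ n * ((3:ℝ) ^ n * (3:ℝ) ^ n)) := div_nonneg hT0 (le_of_lt hd2)
  rw [Real.le_sqrt hx hy]
  have hd1 : (0:ℝ) < ((6:ℝ) ^ n) ^ 2 := by positivity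
  rw [div_pow, div_le_div_iff₀ hd1 hd2]
  calc S ^ 2 * ((2:ℝ) ^ n * ((3:ℝ) ^ n * (3:ℝ) ^ n)) ≤ ((2:ℝ)^n * T) * ((2:ℝ) ^ n * ((3:ℝ) ^ n * (3:ℝ) ^ n)) := by
        apply mul_le_mul_of_nonneg_right hSsq (by positivity)
    _ = T * ((6:ℝ) ^ n) ^ 2 := by
        rw [show (6:ℝ) = 2 * 3 by norm_num, mul_pow]
        ring


def Bad3 (n : ℕ) (F : Profile n → Fin 3) (x : Profile n) : Prop :=
  ∃ b : Fin 3, b ≠ F x ∧ Gc n F x (F x) b = false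

lemma bad_bound (n : ℕ) (F : Profile n → Fin 3) (ε₁ : ℝ)
    (hM : ∀ a b : Fin 3, a ≠ b → Mab n F a b ≤ ε₁) :
    Prob3 n (Bad3 n F) ≤ 6 * Real.sqrt ε₁ := by
  have hpair : ∀ (a b : Fin 3), a ≠ b →
      Prob3 n (fun x => F x = a ∧ Gc n F x a b = false) ≤ Real.sqrt ε₁ := by
    intro a b hab
    exact le_trans (pair_bound n F hab) (Real.sqrt_le_sqrt (hM a b hab))
  have hcover : ∀ x, Bad3 n F x →
      (F x = 0 ∧ Gc n F x 0 1 = false) ∨ ((F x = 1 ∧ Gc n F x 1 0 = false) ∨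
      ((F x = 0 ∧ Gc n F x 0 2 = false) ∨ ((F x = 2 ∧ Gc n F x 2 0 = false) ∨
      ((F x = 1 ∧ Gc n F x 1 2 = false) ∨ (F x = 2 ∧ Gc n F x 2 1 = false))))) := by
    rintro x ⟨b, hb, hg⟩
    rcases pair_enum (F x) b (Ne.symm hb) with ⟨e1, e2⟩ | ⟨e1, e2⟩ | ⟨e1, e2⟩ | ⟨e1, e2⟩ |
      ⟨e1, e2⟩ | ⟨e1, e2⟩
    · exact Or.inl ⟨e1, by rw [← e1, ← e2]; exact hg⟩
    · exact Or.inr (Or.inl ⟨e1, by rw [← e1, ← e2]; exact hg⟩)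
    · exact Or.inr (Or.inr (Or.inl ⟨e1, by rw [← e1, ← e2]; exact hg⟩))
    · exact Or.inr (Or.inr (Or.inr (Or.inl ⟨e1, by rw [← e1, ← e2]; exact hg⟩)))
    · exact Or.inr (Or.inr (Or.inr (Or.inr (Or.inl ⟨e1, by rw [← e1, ← e2]; exact hg⟩))))
    · exact Or.inr (Or.inr (Or.inr (Or.inr (Or.inr ⟨e1, by rw [← e1, ← e2]; exact hg⟩))))
  have c1 := Prob3_or n _ _ _ hcover
  have c2 := Prob3_or n (fun x => (F x = 1 ∧ Gc n F x 1 0 = false) ∨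
      ((F x = 0 ∧ Gc n F x 0 2 = false) ∨ ((F x = 2 ∧ Gc n F x 2 0 = false) ∨
      ((F x = 1 ∧ Gc n F x 1 2 = false) ∨ (F x = 2 ∧ Gc n F x 2 1 = false)))))
    _ _ (fun x h => h)
  have c3 := Prob3_or n (fun x => (F x = 0 ∧ Gc n F x 0 2 = false) ∨
      ((F x = 2 ∧ Gc n F x 2 0 = false) ∨
      ((F x = 1 ∧ Gc n F x 1 2 = false) ∨ (F x = 2 ∧ Gc n F x 2 1 = false))))
    _ _ (fun x h => h)
  have c4 := Prob3_or n (fun x => (F x = 2 ∧ Gc n F x 2 0 = false) ∨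
      ((F x = 1 ∧ Gc n F x 1 2 = false) ∨ (F x = 2 ∧ Gc n F x 2 1 = false)))
    _ _ (fun x h => h)
  have c5 := Prob3_or n (fun x => (F x = 1 ∧ Gc n F x 1 2 = false) ∨
      (F x = 2 ∧ Gc n F x 2 1 = false))
    _ _ (fun x h => h)
  have h01 := hpair 0 1 (by decide)
  have h10 := hpair 1 0 (by decide)
  have h02 := hpair 0 2 (by decide)
  have h20 := hpair 2 0 (by decide)
  have h12 := hpair 1 2 (by decide)
  have h21 := hpair 2 1 (by decide)
  linarith

lemma tour_trans : ∀ d : Fin 3 → Fin 3 → Bool, (∀ a b : Fin 3, a ≠ b → d b a = !d a b) →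
    ∀ a : Fin 3, (∀ b, b ≠ a → d a b = true) →
    ∀ u v w : Fin 3, u ≠ v → v ≠ w → u ≠ w →
      d u v = true → d v w = true → d u w = true := by
  set_option maxRecDepth 10000 in decide

lemma not_bad_top (n : ℕ) (F : Profile n → Fin 3) (x : Profile n) (hnb : ¬ Bad3 n F x) :
    ∀ b, b ≠ F x → Gc n F x (F x) b = true := by
  intro b hb
  rcases h : Gc n F x (F x) b with _ | _
  · exact absurd ⟨b, hb, h⟩ hnb
  · rfl

lemma NT3_le_bad (n : ℕ) (F : Profile n → Fin 3) :
    NT3 n (Gc n F) ≤ Prob3 n (Bad3 n F) := by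
  unfold NT3
  apply Prob3_mono
  intro x hx
  by_contra hnb
  apply hx
  intro a b c hab hbc hac h1 h2
  exact tour_trans (fun u v => Gc n F x u v) (fun u v huv => Gc_antisym n F x u v huv)
    (F x) (not_bad_top n F x hnb) a b c hab hbc hac h1 h2

lemma good_implies_top (n : ℕ) (F : Profile n → Fin 3) (H : Profile n → Fin 3 → Fin 3 → Bool)
    (hHA : Antisym3 n H) (x : Profile n) (hnb : ¬ Bad3 n F x)
    (e01 : Gc n F x 0 1 = H x 0 1) (e02 : Gc n F x 0 2 = H x 0 2)
    (e12 : Gc n F x 1 2 = H x 1 2) : IsTop3 n H x (F x) := by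
  have agree : ∀ u v : Fin 3, u ≠ v → Gc n F x u v = H x u v := by
    intro u v huv
    rcases pair_enum u v huv with ⟨rfl, rfl⟩ | ⟨rfl, rfl⟩ | ⟨rfl, rfl⟩ | ⟨rfl, rfl⟩ |
      ⟨rfl, rfl⟩ | ⟨rfl, rfl⟩
    · exact e01
    · rw [Gc_antisym n F x 0 1 ne01, hHA x 0 1 ne01, e01]
    · exact e02
    · rw [Gc_antisym n F x 0 2 ne02, hHA x 0 2 ne02, e02]
    · exact e12
    · rw [Gc_antisym n F x 1 2 ne12, hHA x 1 2 ne12, e12]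
  intro b hb
  rw [← agree (F x) b (Ne.symm hb)]
  exact not_bad_top n F x hnb b hb

lemma H_dist_bound (n : ℕ) (F : Profile n → Fin 3) (ε : ℝ)
    (hfar : ∀ i : Fin n, distSCF n F (fun x => (x i).symm 0) ≥ ε ∧
      distSCF n F (fun x => (x i).symm 2) ≥ ε)
    (hprob : ∀ a : Fin 3, Prob3 n (fun x => F x = a) ≥ ε)
    (H : Profile n → Fin 3 → Fin 3 → Bool) (hI : IIA3 n H) (hHA : Antisym3 n H)
    (hT : ∀ x, TransAt n H x) :
    ε ≤ Prob3 n (Bad3 n F) + 3 * distG n (Gc n F) H := by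
  have key : ∀ (p : Profile n → Prop), (∀ x, p x → ¬ IsTop3 n H x (F x)) →
      Prob3 n p ≤ Prob3 n (Bad3 n F) + 3 * distG n (Gc n F) H := by
    intro p hp
    have hcover : ∀ x, p x → Bad3 n F x ∨ ((Gc n F x 0 1 ≠ H x 0 1) ∨
        ((Gc n F x 0 2 ≠ H x 0 2) ∨ (Gc n F x 1 2 ≠ H x 1 2))) := by
      intro x hx
      by_contra hno
      push_neg at hno
      obtain ⟨hnb, h1, h2, h3⟩ := hno
      exact hp x hx (good_implies_top n F H hHA x hnb h1 h2 h3)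
    have c1 := Prob3_or n _ _ _ hcover
    have c2 := Prob3_or n (fun x => (Gc n F x 0 1 ≠ H x 0 1) ∨
        ((Gc n F x 0 2 ≠ H x 0 2) ∨ (Gc n F x 1 2 ≠ H x 1 2))) _ _ (fun x h => h)
    have c3 := Prob3_or n (fun x => (Gc n F x 0 2 ≠ H x 0 2) ∨ (Gc n F x 1 2 ≠ H x 1 2))
      _ _ (fun x h => h)
    have hdg : distG n (Gc n F) H = (Prob3 n (fun x => Gc n F x 0 1 ≠ H x 0 1) +
        Prob3 n (fun x => Gc n F x 0 2 ≠ H x 0 2) +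
        Prob3 n (fun x => Gc n F x 1 2 ≠ H x 1 2)) / 3 := rfl
    rw [hdg]
    linarith
  rcases classify n H hI hHA hT with ⟨c, hc⟩ | ⟨i, hi⟩ | ⟨i, hi⟩
  · refine le_trans (hprob c) (key _ ?_)
    intro x hx htop
    rw [hx] at htop
    exact hc x htop
  · refine le_trans ((hfar i).1) (key _ ?_)
    intro x hx htop
    exact hx (hi x (F x) htop)
  · refine le_trans ((hfar i).2) (key _ ?_)
    intro x hx htop
    exact hx (hi x (F x) htop)

lemma TR3_nonempty (n : ℕ) (G : Profile n → Fin 3 → Fin 3 → Bool) :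
    {d : ℝ | ∃ H : Profile n → Fin 3 → Fin 3 → Bool,
      IIA3 n H ∧ Antisym3 n H ∧ (∀ x : Profile n, TransAt n H x) ∧ d = distG n G H}.Nonempty := by
  refine ⟨distG n G (fun _ a b => decide (a < b)), fun _ a b => decide (a < b), ?_, ?_, ?_, rfl⟩
  · intro x y a b _
    rfl
  · intro x a b hab
    show decide (b < a) = !decide (a < b)
    rcases hab.lt_or_gt with h | h
    · rw [decide_eq_false (asymm h), decide_eq_true h]
      rfl
    · rw [decide_eq_true h, decide_eq_false (asymm h)]
      rfl
  · intro x a b c _ _ _ h1 h2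
    simp only [decide_eq_true_eq] at h1 h2 ⊢
    exact lt_trans h1 h2

lemma Mab_nonneg (n : ℕ) (F : Profile n → Fin 3) (a b : Fin 3) : 0 ≤ Mab n F a b := by
  unfold Mab
  positivity

/-- Assuming the quantitative Arrow theorem with constant `C₁` (`NT(G) ≥ C₁ ε'³ whenever
`Dist(G,TR₃) ≥ ε'`), there is a universal constant `C₀ > 0`, depending only on `C₁`, such
that for every SCF `F` on three alternatives that is `ε`-far from every dictatorship and
anti-dictatorship and elects each alternative with probability at least `ε`, if
`M^{a,b}(F) ≤ ε₁` for all pairs then `ε₁ ≥ C₀ ε⁶`. -/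
theorem stmt19 (C₁ : ℝ) (hC₁ : 0 < C₁) :
    ∃ C₀ : ℝ, 0 < C₀ ∧ ∀ n : ℕ, ∀ F : Profile n → Fin 3, ∀ ε ε₁ : ℝ, 0 < ε →
      (∀ G : Profile n → Fin 3 → Fin 3 → Bool, IIA3 n G → Antisym3 n G →
        ∀ ε' : ℝ, 0 < ε' → DistTR3 n G ≥ ε' → NT3 n G ≥ C₁ * ε' ^ 3) →
      (∀ i : Fin n, distSCF n F (fun x => (x i).symm 0) ≥ ε ∧
        distSCF n F (fun x => (x i).symm 2) ≥ ε) →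
      (∀ a : Fin 3, Prob3 n (fun x => F x = a) ≥ ε) →
      (∀ a b : Fin 3, a ≠ b → Mab n F a b ≤ ε₁) →
      ε₁ ≥ C₀ * ε ^ 6 := by
  refine ⟨min (1/144) ((C₁/1296)^2), lt_min (by norm_num) (by positivity), ?_⟩
  intro n F ε ε₁ hε hARR hfar hprob hM
  rw [ge_iff_le]
  have hε₁0 : 0 ≤ ε₁ := le_trans (Mab_nonneg n F 0 1) (hM 0 1 (by decide))
  have hε1 : ε ≤ 1 := le_trans (hprob 0) (Prob3_le_one n _)
  have hBad := bad_bound n F ε₁ hM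
  have hsqrt0 : 0 ≤ Real.sqrt ε₁ := Real.sqrt_nonneg _
  by_cases hcase : ε / 2 ≤ 6 * Real.sqrt ε₁
  · have h1 : ε / 12 ≤ Real.sqrt ε₁ := by linarith
    have h2 : (ε / 12) ^ 2 ≤ ε₁ := by
      have hs := Real.sq_sqrt hε₁0
      nlinarith [hε.le]
    have h3 : ε ^ 6 ≤ ε ^ 2 := by
      calc ε ^ 6 = ε ^ 2 * ε ^ 4 := by ring
        _ ≤ ε ^ 2 * 1 := by
            apply mul_le_mul_of_nonneg_left _ (by positivity)
            calc ε ^ 4 ≤ 1 ^ 4 := by apply pow_le_pow_left₀ hε.le hε1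
              _ = 1 := by norm_num
        _ = ε ^ 2 := by ring
    calc min (1/144) ((C₁/1296)^2) * ε ^ 6 ≤ (1/144) * ε ^ 2 := by
          apply mul_le_mul (min_le_left _ _) h3 (by positivity) (by norm_num)
      _ = (ε / 12) ^ 2 := by ring
      _ ≤ ε₁ := h2
  · push_neg at hcase
    have hDlb : ∀ d ∈ {d : ℝ | ∃ H : Profile n → Fin 3 → Fin 3 → Bool,
        IIA3 n H ∧ Antisym3 n H ∧ (∀ x : Profile n, TransAt n H x) ∧
        d = distG n (Gc n F) H}, ε / 6 ≤ d := by
      rintro d ⟨H, hI, hHA, hT, rfl⟩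
      have := H_dist_bound n F ε hfar hprob H hI hHA hT
      linarith
    have hDist : DistTR3 n (Gc n F) ≥ ε / 6 :=
      le_csInf (TR3_nonempty n (Gc n F)) hDlb
    have hNT := hARR (Gc n F) (Gc_IIA n F) (Gc_antisym n F) (ε / 6) (by positivity) hDist
    have hNTle := le_trans (NT3_le_bad n F) hBad
    have h4 : C₁ * (ε / 6) ^ 3 ≤ 6 * Real.sqrt ε₁ := le_trans hNT hNTle
    have h5 : C₁ * ε ^ 3 / 1296 ≤ Real.sqrt ε₁ := by nlinarith [h4]
    have h6 : (C₁ * ε ^ 3 / 1296) ^ 2 ≤ ε₁ := by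
      have hs := Real.sq_sqrt hε₁0
      have hnn : 0 ≤ C₁ * ε ^ 3 / 1296 := by positivity
      nlinarith [Real.sqrt_nonneg ε₁]
    calc min (1/144) ((C₁/1296)^2) * ε ^ 6 ≤ ((C₁/1296)^2) * ε ^ 6 :=
          mul_le_mul_of_nonneg_right (min_le_right _ _) (by positivity)
      _ = (C₁ * ε ^ 3 / 1296) ^ 2 := by ring
      _ ≤ ε₁ := h6
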